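/- arXiv:2208.03783 — 4 statements merged into one kernel-verified Lean document; each statement's English description precedes it below -/
import Mathlib

section
/- Let p ≥ 5 be prime and g(p) = n₊(A₁⁽¹⁾)(p) over a field F of characteristic p. Then the center Z(g(p)) equals F·e_p if p ≢ 2 (mod 3), and equals F·e_{p-1} ⊕ F·e_p if p ≡ 2 (mod 3). -/
noncomputable section

/-- The structure constants: `aZ i j` is 1, 0, or -1 according as
`j - i` is congruent to 1, 0, or -1 modulo 3. -/
def aZ (i j : ℕ) : ℤ :=
  if ((j : ℤ) - (i : ℤ)) % 3 = 1 then 1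
  else if ((j : ℤ) - (i : ℤ)) % 3 = 0 then 0
  else -1

variable (F : Type*) [Field F] (p : ℕ)

/-- The structure constants viewed in the field `F`. -/
def aF (i j : ℕ) : F := ((aZ i j : ℤ) : F)

/-- The basis vector `e_k` (for `1 ≤ k ≤ p`) of the truncated algebra
`g(p) = n₊(A₁⁽¹⁾)(p)`, modelled on `Fin p → F`; `E k = 0` for `k` out of range. -/
def E (k : ℕ) : Fin p → F :=
  if h : 1 ≤ k ∧ k ≤ p then Pi.single (⟨k - 1, by omega⟩ : Fin p) 1 else 0

/-- The `k`-th coordinate (coefficient of `e_k`) of an element of `g(p)`. -/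
def coord (k : ℕ) (g : Fin p → F) : F :=
  if h : 1 ≤ k ∧ k ≤ p then g ⟨k - 1, by omega⟩ else 0

/-- The Lie bracket of `g(p)`: `[e_i, e_j] = a_{i,j} e_{i+j}`, interpreted as `0`
when `i + j > p`. -/
def br (f g : Fin p → F) : Fin p → F :=
  ∑ i : Fin p, ∑ j : Fin p,
    (f i * g j * aF F (i.1 + 1) (j.1 + 1)) • E F p (i.1 + 1 + (j.1 + 1))

section Helpers

variable {F} {p}

lemma aF_ne_zero {i j : ℕ} (h : ((j : ℤ) - (i : ℤ)) % 3 ≠ 0) : aF F i j ≠ 0 := by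
  unfold aF aZ
  rcases (show ((j : ℤ) - (i : ℤ)) % 3 = 1 ∨ ((j : ℤ) - (i : ℤ)) % 3 = 2 by omega) with h1 | h1
  · rw [if_pos h1]; simp
  · rw [if_neg (by omega), if_neg (by omega)]; simp

lemma aF_eq_zero {i j : ℕ} (h : ((j : ℤ) - (i : ℤ)) % 3 = 0) : aF F i j = 0 := by
  unfold aF aZ
  rw [if_neg (by omega), if_pos h]
  simp

lemma E_apply (k : ℕ) (m : Fin p) : E F p k m = if k = m.1 + 1 then 1 else 0 := by
  have hm := m.2
  by_cases hk : k = m.1 + 1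
  · subst hk
    rw [if_pos rfl]
    unfold E
    rw [dif_pos ⟨by omega, by omega⟩, Pi.single_apply, if_pos (Fin.ext (by simp))]
  · rw [if_neg hk]
    unfold E
    by_cases h1 : 1 ≤ k ∧ k ≤ p
    · rw [dif_pos h1, Pi.single_apply, if_neg ?_]
      intro he
      rw [Fin.ext_iff] at he
      simp at he
      omega
    · rw [dif_neg h1]
      rfl

lemma br_apply (z g : Fin p → F) (m : Fin p) :
    br F p z g m = ∑ i : Fin p, ∑ j : Fin p,
      z i * g j * aF F (i.1 + 1) (j.1 + 1) *
        (if i.1 + 1 + (j.1 + 1) = m.1 + 1 then 1 else 0) := by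
  unfold br
  rw [Finset.sum_apply]
  refine Finset.sum_congr rfl fun i _ => ?_
  rw [Finset.sum_apply]
  refine Finset.sum_congr rfl fun j _ => ?_
  rw [Pi.smul_apply, smul_eq_mul, E_apply]

lemma br_add_left (x y g : Fin p → F) : br F p (x + y) g = br F p x g + br F p y g := by
  unfold br
  rw [← Finset.sum_add_distrib]
  refine Finset.sum_congr rfl fun i _ => ?_
  rw [← Finset.sum_add_distrib]
  refine Finset.sum_congr rfl fun j _ => ?_
  rw [Pi.add_apply, add_mul, add_mul, add_smul]

lemma br_smul_left (c : F) (x g : Fin p → F) : br F p (c • x) g = c • br F p x g := by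
  unfold br
  rw [Finset.smul_sum]
  refine Finset.sum_congr rfl fun i _ => ?_
  rw [Finset.smul_sum]
  refine Finset.sum_congr rfl fun j _ => ?_
  rw [Pi.smul_apply, smul_eq_mul, smul_smul]
  congr 1
  ring

lemma central_coord (z : Fin p → F) (hz : ∀ g, br F p z g = 0) (i j : Fin p)
    (hij : i.1 + j.1 + 2 ≤ p) : z i * aF F (i.1 + 1) (j.1 + 1) = 0 := by
  have hmlt : i.1 + j.1 + 1 < p := by omega
  set m : Fin p := ⟨i.1 + j.1 + 1, hmlt⟩ with hmdef
  have hm : m.1 = i.1 + j.1 + 1 := rfl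
  have h := congrFun (hz (Pi.single j 1)) m
  rw [br_apply] at h
  simp only [Pi.zero_apply] at h
  rw [Finset.sum_eq_single i] at h
  · rw [Finset.sum_eq_single j] at h
    · rw [Pi.single_eq_same, mul_one, if_pos (by omega), mul_one] at h
      exact h
    · intro b _ hb
      simp [Pi.single_eq_of_ne hb]
    · simp
  · intro b _ hb
    refine Finset.sum_eq_zero fun j' _ => ?_
    by_cases hj' : j' = j
    · subst hj'
      have hbi : b.1 ≠ i.1 := fun hh => hb (Fin.ext hh)
      rw [if_neg (by omega)]
      exact mul_zero _
    · simp [Pi.single_eq_of_ne hj']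
  · simp

lemma E_p_mem (h1 : 1 ≤ p) (g : Fin p → F) : br F p (E F p p) g = 0 := by
  funext m
  rw [br_apply]
  refine Finset.sum_eq_zero fun i _ => Finset.sum_eq_zero fun j _ => ?_
  have hm := m.2
  by_cases hi : i.1 = p - 1
  · rw [if_neg (by omega)]
    exact mul_zero _
  · have hE : E F p p i = 0 := by rw [E_apply, if_neg (by omega)]
    simp [hE]

lemma E_pm1_mem (hp3 : p % 3 = 2) (h5 : 5 ≤ p) (g : Fin p → F) :
    br F p (E F p (p - 1)) g = 0 := by
  funext m
  rw [br_apply]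
  refine Finset.sum_eq_zero fun i _ => Finset.sum_eq_zero fun j _ => ?_
  have hm := m.2
  by_cases hi : i.1 = p - 2
  · by_cases hj : j.1 = 0
    · have ha : aF F (i.1 + 1) (j.1 + 1) = (0 : F) := aF_eq_zero (by omega)
      simp [ha]
    · rw [if_neg (by omega)]
      exact mul_zero _
  · have hE : E F p (p - 1) i = 0 := by rw [E_apply, if_neg (by omega)]
    simp [hE]

lemma central_vanish (h5 : 5 ≤ p) (z : Fin p → F) (hz : ∀ g, br F p z g = 0)
    (k : Fin p) (hk : k.1 + 3 ≤ p) : z k = 0 := by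
  by_cases h3 : (k.1 : ℤ) % 3 = 0
  · have h := central_coord z hz k ⟨1, by omega⟩ (show k.1 + 1 + 2 ≤ p by omega)
    have ha : aF F (k.1 + 1) ((1 : ℕ) + 1) ≠ 0 := aF_ne_zero (by omega)
    exact (mul_eq_zero.1 h).resolve_right ha
  · have h := central_coord z hz k ⟨0, by omega⟩ (show k.1 + 0 + 2 ≤ p by omega)
    have ha : aF F (k.1 + 1) ((0 : ℕ) + 1) ≠ 0 := aF_ne_zero (by omega)
    exact (mul_eq_zero.1 h).resolve_right ha

lemma central_vanish2 (h5 : 5 ≤ p) (hp3 : p % 3 ≠ 2) (z : Fin p → F)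
    (hz : ∀ g, br F p z g = 0) (k : Fin p) (hk : k.1 = p - 2) : z k = 0 := by
  have h := central_coord z hz k ⟨0, by omega⟩ (show k.1 + 0 + 2 ≤ p by omega)
  have ha : aF F (k.1 + 1) ((0 : ℕ) + 1) ≠ 0 := aF_ne_zero (by omega)
  exact (mul_eq_zero.1 h).resolve_right ha

end Helpers

/-- The center of `g(p)` is `F·e_p` if `p ≢ 2 (mod 3)`, and `F·e_{p-1} ⊕ F·e_p`
if `p ≡ 2 (mod 3)`. -/
theorem center_of_truncated (p : ℕ) (hp : p.Prime) (h5 : 5 ≤ p)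
    (F : Type*) [Field F] [CharP F p] :
    (p % 3 ≠ 2 →
      {z : Fin p → F | ∀ g, br F p z g = 0} = ↑(Submodule.span F {E F p p})) ∧
    (p % 3 = 2 →
      {z : Fin p → F | ∀ g, br F p z g = 0}
        = ↑(Submodule.span F {E F p (p - 1), E F p p})) := by
  constructor
  · intro h3
    ext z
    simp only [Set.mem_setOf_eq, SetLike.mem_coe]
    constructor
    · intro hz
      rw [Submodule.mem_span_singleton]
      refine ⟨z ⟨p - 1, by omega⟩, funext fun k => ?_⟩
      rw [Pi.smul_apply, smul_eq_mul, E_apply]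
      have hk := k.2
      by_cases hkp : k.1 = p - 1
      · rw [if_pos (by omega), mul_one]
        congr 1
        exact Fin.ext (show p - 1 = k.1 by omega)
      · rw [if_neg (by omega), mul_zero]
        by_cases hk2 : k.1 = p - 2
        · exact (central_vanish2 h5 h3 z hz k hk2).symm
        · exact (central_vanish h5 z hz k (by omega)).symm
    · rintro hz g
      obtain ⟨c, hc⟩ := Submodule.mem_span_singleton.1 hz
      rw [← hc, br_smul_left, E_p_mem (by omega), smul_zero]
  · intro h3
    ext z
    simp only [Set.mem_setOf_eq, SetLike.mem_coe]
    constructor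
    · intro hz
      rw [Submodule.mem_span_pair]
      refine ⟨z ⟨p - 2, by omega⟩, z ⟨p - 1, by omega⟩, funext fun k => ?_⟩
      rw [Pi.add_apply, Pi.smul_apply, Pi.smul_apply, smul_eq_mul, smul_eq_mul,
        E_apply, E_apply]
      have hk := k.2
      by_cases hk1 : k.1 = p - 1
      · rw [if_neg (by omega), if_pos (by omega), mul_zero, mul_one, zero_add]
        congr 1
        exact Fin.ext (show p - 1 = k.1 by omega)
      · by_cases hk2 : k.1 = p - 2
        · rw [if_pos (by omega), if_neg (by omega), mul_zero, mul_one, add_zero]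
          congr 1
          exact Fin.ext (show p - 2 = k.1 by omega)
        · rw [if_neg (by omega), if_neg (by omega), mul_zero, mul_zero, add_zero]
          exact (central_vanish h5 z hz k (by omega)).symm
    · rintro hz g
      obtain ⟨c, d, hcd⟩ := Submodule.mem_span_pair.1 hz
      rw [← hcd, br_add_left, br_smul_left, br_smul_left, E_pm1_mem h3 h5,
        E_p_mem (by omega), smul_zero, smul_zero, add_zero]
end
end

section
/- For g(p) = n₊(A₁⁽¹⁾)(p) with p ≥ 5 prime, the kernel of d¹: C¹ → C² has basis {e¹, e²}; consequently dim H¹(g(p), F) = 2. -/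
noncomputable section

variable (F : Type*) [Field F] (p : ℕ)

/-- `s(k)`: `k/2 - 1` if `k` is even, `(k-1)/2` if `k` is odd. -/
def sdeg (k : ℕ) : ℕ := if k % 2 = 0 then k / 2 - 1 else (k - 1) / 2

/-- `M(p,k) = 1` if `k ≤ p + 1`, and `k - p` otherwise. -/
def Mlow (p k : ℕ) : ℕ := if k ≤ p + 1 then 1 else k - p

/-- The 2-cochain `e^{i,j}`, the dual of `e_i ∧ e_j`, as a bilinear form. -/
def wedge (i j : ℕ) (g h : Fin p → F) : F :=
  coord F p i g * coord F p j h - coord F p j g * coord F p i h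

/-- The 2-cochain `φ_k = Σ_{i = M(p,k)}^{s(k)} a_{i,k-i} e^{i,k-i}`. -/
def phiC (k : ℕ) (g h : Fin p → F) : F :=
  ∑ i ∈ Finset.Icc (Mlow p k) (sdeg k), aF F i (k - i) * wedge F p i (k - i) g h

/-- The Chevalley–Eilenberg differential `d²` with trivial coefficients. -/
def d2 (φ : (Fin p → F) → (Fin p → F) → F) (g h f : Fin p → F) : F :=
  φ (br F p g h) f - φ (br F p g f) h + φ (br F p h f) g

/-- The space `C² = (Λ² g(p))*`, modelled as the span of the `e^{i,j}`. -/
def C2span : Submodule F ((Fin p → F) → (Fin p → F) → F) :=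
  Submodule.span F {w | ∃ i j : ℕ, 1 ≤ i ∧ i < j ∧ j ≤ p ∧ w = wedge F p i j}

/-- The dual basis vector `e^k ∈ C¹ = g(p)*` (zero for `k` out of range). -/
def coordL (k : ℕ) : Module.Dual F (Fin p → F) :=
  if h : 1 ≤ k ∧ k ≤ p then LinearMap.proj (⟨k - 1, by omega⟩ : Fin p) else 0

/-- Evaluation of `E` pointwise. -/
lemma E_apply_s10 (i : ℕ) (hi1 : 1 ≤ i) (hip : i ≤ p) (a : Fin p) :
    E F p i a = if (a : ℕ) = i - 1 then 1 else 0 := by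
  unfold E
  rw [dif_pos ⟨hi1, hip⟩, Pi.single_apply]
  congr 1
  simp [Fin.ext_iff]

lemma coordL_E (k m : ℕ) (hk : 1 ≤ k) (hkp : k ≤ p) :
    coordL F p k (E F p m) = if m = k then 1 else 0 := by
  unfold coordL
  rw [dif_pos ⟨hk, hkp⟩]
  by_cases hm : 1 ≤ m ∧ m ≤ p
  · rw [LinearMap.proj_apply, E_apply_s10 F p m hm.1 hm.2]
    congr 1
    simp only [eq_iff_iff]
    omega
  · have : E F p m = 0 := by unfold E; rw [dif_neg hm]
    rw [this]
    rw [if_neg (by omega)]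
    simp

lemma br_E (i j : ℕ) (hi1 : 1 ≤ i) (hip : i ≤ p) (hj1 : 1 ≤ j) (hjp : j ≤ p) :
    br F p (E F p i) (E F p j) = aF F i j • E F p (i + j) := by
  unfold br
  rw [Finset.sum_eq_single (⟨i - 1, by omega⟩ : Fin p)]
  · rw [Finset.sum_eq_single (⟨j - 1, by omega⟩ : Fin p)]
    · rw [E_apply_s10 F p i hi1 hip, E_apply_s10 F p j hj1 hjp]
      simp only [if_pos rfl]
      have h1 : i - 1 + 1 = i := by omega
      have h2 : j - 1 + 1 = j := by omega
      rw [h1, h2]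
      norm_num
    · intro b _ hb
      rw [E_apply_s10 F p j hj1 hjp]
      rw [if_neg (by simp [Fin.ext_iff] at hb ⊢; omega)]
      simp
    · intro h; exact absurd (Finset.mem_univ _) h
  · intro a _ ha
    rw [E_apply_s10 F p i hi1 hip]
    rw [if_neg (by simp [Fin.ext_iff] at ha ⊢; omega)]
    simp
  · intro h; exact absurd (Finset.mem_univ _) h

lemma psi_E_zero {ψ : Module.Dual F (Fin p → F)}
    (hψ : ∀ g h, ψ (br F p g h) = 0) (k : ℕ) (hk3 : 3 ≤ k) (hkp : k ≤ p) :
    ψ (E F p k) = 0 := by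
  have key : ∀ i : ℕ, 1 ≤ i → i ≤ p → i < k →
      (aZ i (k - i) = 1 ∨ aZ i (k - i) = -1) → ψ (E F p k) = 0 := by
    intro i h1 h2 h3 ha
    have hb := hψ (E F p i) (E F p (k - i))
    rw [br_E F p i (k - i) h1 h2 (by omega) (by omega),
      Nat.add_sub_cancel' (le_of_lt h3), map_smul, smul_eq_mul] at hb
    unfold aF at hb
    rcases ha with ha | ha <;> rw [ha] at hb <;> simpa [neg_eq_zero] using hb
  by_cases h2 : k % 3 = 2
  · refine key 2 (by omega) (by omega) (by omega) ?_
    unfold aZ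
    split_ifs with hA hB
    · left; rfl
    · exfalso; omega
    · right; rfl
  · refine key 1 (by omega) (by omega) (by omega) ?_
    unfold aZ
    split_ifs with hA hB
    · left; rfl
    · exfalso; omega
    · right; rfl

lemma coordL_br (k : ℕ) (hk1 : 1 ≤ k) (hk2 : k ≤ 2) (hp5 : 5 ≤ p) (g h : Fin p → F) :
    coordL F p k (br F p g h) = 0 := by
  unfold br
  rw [map_sum]
  refine Finset.sum_eq_zero fun a _ => ?_
  rw [map_sum]
  refine Finset.sum_eq_zero fun b _ => ?_
  rw [map_smul, smul_eq_mul, coordL_E F p k _ hk1 (by omega)]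
  by_cases hm : a.1 + 1 + (b.1 + 1) = k
  · rw [if_pos hm]
    have ha0 : a.1 = 0 := by omega
    have hb0 : b.1 = 0 := by omega
    have : aF F (a.1 + 1) (b.1 + 1) = 0 := by
      rw [ha0, hb0]; unfold aF aZ; norm_num
    rw [this]; ring
  · rw [if_neg hm]; ring

/-- The kernel of `d¹ : C¹ → C²` is spanned by `e¹, e²`, and `dim H¹(g(p), F) = 2`. -/
theorem ker_d1 (p : ℕ) (hp : p.Prime) (h5 : 5 ≤ p)
    (F : Type*) [Field F] [CharP F p] :
    ({ψ : Module.Dual F (Fin p → F) | ∀ g h, ψ (br F p g h) = 0}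
      = ↑(Submodule.span F {coordL F p 1, coordL F p 2})) ∧
    Module.finrank F ↥(Submodule.span F {coordL F p 1, coordL F p 2}) = 2 := by
  constructor
  · ext ψ
    simp only [Set.mem_setOf_eq, SetLike.mem_coe]
    constructor
    · intro hψ
      have hdecomp : ψ = ψ (E F p 1) • coordL F p 1 + ψ (E F p 2) • coordL F p 2 := by
        apply LinearMap.ext; intro x
        rw [LinearMap.pi_apply_eq_sum_univ ψ x]
        have hE : ∀ a : Fin p, (fun j => if a = j then (1 : F) else 0) = E F p (a.1 + 1) := by
          intro a; funext j
          rw [E_apply_s10 F p _ (by omega) (by omega)]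
          congr 1
          simp only [eq_iff_iff, Fin.ext_iff]
          omega
        simp only [hE]
        have hsub : ∑ a : Fin p, x a • ψ (E F p (a.1 + 1)) =
            ∑ a ∈ ({⟨0, by omega⟩, ⟨1, by omega⟩} : Finset (Fin p)),
              x a • ψ (E F p (a.1 + 1)) := by
          refine (Finset.sum_subset (Finset.subset_univ _) fun a _ ha => ?_).symm
          have ha2 : 2 ≤ a.1 := by
            simp only [Finset.mem_insert, Finset.mem_singleton, Fin.ext_iff] at ha
            omega
          rw [psi_E_zero F p hψ (a.1 + 1) (by omega) (by omega), smul_zero]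
        rw [hsub, Finset.sum_pair (by simp [Fin.ext_iff])]
        simp only [LinearMap.add_apply, LinearMap.smul_apply, smul_eq_mul]
        have c1 : coordL F p 1 x = x ⟨0, by omega⟩ := by
          unfold coordL; rw [dif_pos ⟨le_refl 1, by omega⟩]; rfl
        have c2 : coordL F p 2 x = x ⟨1, by omega⟩ := by
          unfold coordL; rw [dif_pos ⟨by omega, by omega⟩]; rfl
        rw [c1, c2]
        ring
      rw [hdecomp]
      exact Submodule.add_mem _
        (Submodule.smul_mem _ _ (Submodule.subset_span (Set.mem_insert _ _)))
        (Submodule.smul_mem _ _ (Submodule.subset_span (Set.mem_insert_of_mem _ rfl)))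
    · intro hψ g h
      induction hψ using Submodule.span_induction with
      | mem ψ hmem =>
        rcases hmem with hmem | hmem
        · rw [hmem]; exact coordL_br F p 1 le_rfl (by omega) h5 g h
        · rw [Set.mem_singleton_iff] at hmem
          rw [hmem]; exact coordL_br F p 2 (by omega) le_rfl h5 g h
      | zero => simp
      | add ψ₁ ψ₂ _ _ h1 h2 => simp [h1, h2]
      | smul c ψ' _ hih => simp [hih]
  · have hrange : ({coordL F p 1, coordL F p 2} : Set (Module.Dual F (Fin p → F)))
        = Set.range ![coordL F p 1, coordL F p 2] := by
      ext w
      simp [Fin.exists_fin_two]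
      tauto
    have hli : LinearIndependent F ![coordL F p 1, coordL F p 2] := by
      rw [LinearIndependent.pair_iff]
      intro s t hst
      have h1 := congrArg (fun f : Module.Dual F (Fin p → F) => f (E F p 1)) hst
      have h2 := congrArg (fun f : Module.Dual F (Fin p → F) => f (E F p 2)) hst
      simp only [LinearMap.add_apply, LinearMap.smul_apply, smul_eq_mul,
        LinearMap.zero_apply] at h1 h2
      rw [coordL_E F p 1 1 le_rfl (by omega), coordL_E F p 2 1 (by omega) (by omega)] at h1
      rw [coordL_E F p 1 2 le_rfl (by omega), coordL_E F p 2 2 (by omega) (by omega)] at h2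
      norm_num at h1 h2
      exact ⟨h1, h2⟩
    rw [hrange, finrank_span_eq_card hli]
    simp

end
end

section
/- For g(p) = n₊(A₁⁽¹⁾)(p) with p ≥ 5 prime and any degree k with p + 2 < k ≤ 2p - 1, the degree-k component of the kernel of d² is zero: ker d²_k = 0. -/
noncomputable section

variable (F : Type*) [Field F] (p : ℕ)

section Helpers

variable {F p}

lemma E_out {a : ℕ} (h : ¬ (1 ≤ a ∧ a ≤ p)) : E F p a = 0 := dif_neg h

lemma coord_smul (i : ℕ) (c : F) (g : Fin p → F) :
    coord F p i (c • g) = c * coord F p i g := by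
  unfold coord
  split_ifs with h
  · simp
  · simp

lemma coord_E_self {a : ℕ} (ha : 1 ≤ a) (ha' : a ≤ p) :
    coord F p a (E F p a) = 1 := by
  unfold coord E
  rw [dif_pos ⟨ha, ha'⟩, dif_pos ⟨ha, ha'⟩, Pi.single_eq_same]

lemma coord_E_ne {a b : ℕ} (hab : a ≠ b) :
    coord F p a (E F p b) = 0 := by
  unfold coord E
  split_ifs with h1 h2
  · rw [Pi.single_apply, if_neg]
    intro hc
    apply hab
    have := Fin.mk.injEq (n := p) (a - 1) _ (b - 1) _ ▸ hc
    simp only [Fin.mk.injEq] at hc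
    omega
  · simp
  · rfl

lemma coord_zero (i : ℕ) : coord F p i (0 : Fin p → F) = 0 := by
  unfold coord; split_ifs <;> simp

lemma E_apply_ne {a : ℕ} (ha : 1 ≤ a) (ha' : a ≤ p) {i : Fin p}
    (h : (i : ℕ) ≠ a - 1) : E F p a i = 0 := by
  unfold E
  rw [dif_pos ⟨ha, ha'⟩, Pi.single_apply, if_neg]
  intro hc
  exact h (by rw [hc])

lemma E_apply_self {a : ℕ} (ha : 1 ≤ a) (ha' : a ≤ p) :
    E F p a ⟨a - 1, by omega⟩ = 1 := by
  unfold E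
  rw [dif_pos ⟨ha, ha'⟩, Pi.single_eq_same]

lemma br_E_s16 {a b : ℕ} (ha : 1 ≤ a) (ha' : a ≤ p) (hb : 1 ≤ b) (hb' : b ≤ p) :
    br F p (E F p a) (E F p b) = aF F a b • E F p (a + b) := by
  unfold br
  rw [Finset.sum_eq_single_of_mem (⟨a - 1, by omega⟩ : Fin p) (Finset.mem_univ _)]
  · rw [Finset.sum_eq_single_of_mem (⟨b - 1, by omega⟩ : Fin p) (Finset.mem_univ _)]
    · rw [E_apply_self ha ha', E_apply_self hb hb']
      have h1 : a - 1 + 1 = a := by omega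
      have h2 : b - 1 + 1 = b := by omega
      simp only [h1, h2, one_mul]
    · intro j _ hj
      rw [E_apply_ne hb hb' (by simpa [Fin.ext_iff] using hj)]
      simp
  · intro i _ hi
    rw [E_apply_ne ha ha' (by simpa [Fin.ext_iff] using hi)]
    apply Finset.sum_eq_zero
    intro j _
    simp

lemma sdeg_iff {b k : ℕ} (hk : 1 ≤ k) : b ≤ sdeg k ↔ 2 * b < k := by
  unfold sdeg
  split_ifs with h <;> omega

end Helpers

/-- For `p + 2 < k ≤ 2p - 1`, the degree-`k` component of the kernel of `d²` is zero. -/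
theorem ker_d2_high_degree (p : ℕ) (hp : p.Prime) (h5 : 5 ≤ p)
    (F : Type*) [Field F] [CharP F p] (k : ℕ) (hk1 : p + 2 < k) (hk2 : k ≤ 2 * p - 1) :
    ∀ φ ∈ Submodule.span F
        {w : (Fin p → F) → (Fin p → F) → F |
          ∃ i j : ℕ, 1 ≤ i ∧ i < j ∧ j ≤ p ∧ i + j = k ∧ w = wedge F p i j},
      (∀ g h f, d2 F p φ g h f = 0) → φ = 0 := by
  intro φ hφ hd2
  -- Step 1: bilinearity and antisymmetry of φ
  have key : (∀ (c : F) v w, φ (c • v) w = c * φ v w) ∧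
      (∀ (c : F) v w, φ v (c • w) = c * φ v w) ∧
      (∀ v w, φ v w = - φ w v) := by
    refine Submodule.span_induction
      (p := fun ψ _ => (∀ (c : F) v w, ψ (c • v) w = c * ψ v w) ∧
        (∀ (c : F) v w, ψ v (c • w) = c * ψ v w) ∧
        (∀ v w, ψ v w = - ψ w v)) ?_ ?_ ?_ ?_ hφ
    · rintro w ⟨i, j, hi, hij, hj, hijk, rfl⟩
      refine ⟨fun c v w => ?_, fun c v w => ?_, fun v w => ?_⟩ <;>
        simp only [wedge, coord_smul] <;> ring
    · exact ⟨fun c v w => by simp, fun c v w => by simp, fun v w => by simp⟩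
    · rintro x y hx hy ⟨hx1, hx2, hx3⟩ ⟨hy1, hy2, hy3⟩
      exact ⟨fun c v w => by simp only [Pi.add_apply, hx1, hy1]; ring,
        fun c v w => by simp only [Pi.add_apply, hx2, hy2]; ring,
        fun v w => by simp only [Pi.add_apply, hx3 v w, hy3 v w]; ring⟩
    · rintro a x hx ⟨hx1, hx2, hx3⟩
      exact ⟨fun c v w => by simp only [Pi.smul_apply, smul_eq_mul, hx1]; ring,
        fun c v w => by simp only [Pi.smul_apply, smul_eq_mul, hx2]; ring,
        fun v w => by simp only [Pi.smul_apply, smul_eq_mul, hx3 v w]; ring⟩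
  obtain ⟨hsl, hsr, hanti⟩ := key
  have hzl : ∀ w, φ 0 w = 0 := fun w => by
    have := hsl 0 0 w; simpa using this
  have hzr : ∀ v, φ v 0 = 0 := fun v => by
    have := hsr 0 v 0; simpa using this
  -- Step 2: the structure equations
  have main_eq : ∀ a b c : ℕ, 1 ≤ a → a ≤ p → 1 ≤ b → b ≤ p → 1 ≤ c → c ≤ p →
      aF F a b * φ (E F p (a + b)) (E F p c) - aF F a c * φ (E F p (a + c)) (E F p b)
        + aF F b c * φ (E F p (b + c)) (E F p a) = 0 := by
    intro a b c ha ha' hb hb' hc hc'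
    have h := hd2 (E F p a) (E F p b) (E F p c)
    rw [d2, br_E_s16 ha ha' hb hb', br_E_s16 ha ha' hc hc', br_E_s16 hb hb' hc hc',
      hsl, hsl, hsl] at h
    linear_combination h
  -- Step 3: all coefficients vanish
  have hpsi : ∀ x : ℕ, φ (E F p x) (E F p (k - x)) = 0 := by
    intro x
    induction x using Nat.strong_induction_on with
    | _ x ih =>
    by_cases hxp : x ≤ p
    · by_cases hxm : k - p ≤ x
      · -- main case: k - p ≤ x ≤ p, note k - p ≥ 3
        have hx3 : 3 ≤ x := by omega
        have hkx1 : 1 ≤ k - x := by omega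
        have hkx2 : k - x ≤ p := by omega
        by_cases hmod : x % 3 = 2
        · -- use triple (2, x-2, k-x)
          have heq := main_eq 2 (x - 2) (k - x) (by omega) (by omega) (by omega)
            (by omega) hkx1 hkx2
          have e1 : 2 + (x - 2) = x := by omega
          have e2 : 2 + (k - x) = k - (x - 2) := by omega
          have e3 : x - 2 + (k - x) = k - 2 := by omega
          rw [e1, e2, e3] at heq
          rw [E_out (a := k - 2) (by omega), hzl, mul_zero, add_zero] at heq
          rw [hanti (E F p (k - (x - 2))) (E F p (x - 2)), ih (x - 2) (by omega)] at heq
          have haf : aF F 2 (x - 2) = 1 := by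
            unfold aF aZ
            rw [if_pos (by omega)]
            norm_num
          rw [haf, one_mul] at heq
          simpa using heq
        · -- use triple (1, x-1, k-x)
          have heq := main_eq 1 (x - 1) (k - x) (by omega) (by omega) (by omega)
            (by omega) hkx1 hkx2
          have e1 : 1 + (x - 1) = x := by omega
          have e2 : 1 + (k - x) = k - (x - 1) := by omega
          have e3 : x - 1 + (k - x) = k - 1 := by omega
          rw [e1, e2, e3] at heq
          rw [E_out (a := k - 1) (by omega), hzl, mul_zero, add_zero] at heq
          rw [hanti (E F p (k - (x - 1))) (E F p (x - 1)), ih (x - 1) (by omega)] at heq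
          by_cases hmod0 : x % 3 = 0
          · have haf : aF F 1 (x - 1) = 1 := by
              unfold aF aZ
              rw [if_pos (by omega)]
              norm_num
            rw [haf, one_mul] at heq
            simpa using heq
          · -- x % 3 = 1
            have haf : aF F 1 (x - 1) = -1 := by
              unfold aF aZ
              rw [if_neg (by omega), if_neg (by omega)]
              norm_num
            rw [haf] at heq
            have h2 : -φ (E F p x) (E F p (k - x)) = 0 := by simpa using heq
            exact neg_eq_zero.mp h2
      · -- x < k - p : then k - x > p
        rw [E_out (a := k - x) (by omega), hzr]
    · -- x > p
      rw [E_out (a := x) (by omega), hzl]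
  -- Step 4: reconstruction of φ from its coefficients
  have hrec : φ = ∑ i ∈ Finset.Icc 1 (sdeg k),
      φ (E F p i) (E F p (k - i)) • wedge F p i (k - i) := by
    refine Submodule.span_induction
      (p := fun ψ _ => ψ = ∑ i ∈ Finset.Icc 1 (sdeg k),
        ψ (E F p i) (E F p (k - i)) • wedge F p i (k - i)) ?_ ?_ ?_ ?_ hφ
    · rintro w ⟨i, j, hi, hij, hj, hijk, rfl⟩
      have hk1 : 1 ≤ k := by omega
      have hjk : k - i = j := by omega
      rw [Finset.sum_eq_single_of_mem i
        (Finset.mem_Icc.mpr ⟨hi, (sdeg_iff hk1).mpr (by omega)⟩)]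
      · rw [hjk]
        have : wedge F p i j (E F p i) (E F p j) = 1 := by
          unfold wedge
          rw [coord_E_self hi (by omega), coord_E_self (by omega) hj,
            show coord F p j (E F p i) = 0 from coord_E_ne (by omega),
            show coord F p i (E F p j) = 0 from coord_E_ne (by omega)]
          ring
        rw [this, one_smul]
      · intro b hb hbi
        have hbs := (Finset.mem_Icc.mp hb).2
        have hb2 : 2 * b < k := (sdeg_iff hk1).mp hbs
        have : wedge F p i j (E F p b) (E F p (k - b)) = 0 := by
          unfold wedge
          rw [show coord F p i (E F p b) = 0 from coord_E_ne (by omega),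
            show coord F p j (E F p b) = 0 from coord_E_ne (by omega)]
          ring
        rw [this, zero_smul]
    · simp
    · rintro x y hx hy hx1 hy1
      conv_lhs => rw [hx1, hy1]
      rw [← Finset.sum_add_distrib]
      refine Finset.sum_congr rfl fun i _ => ?_
      simp only [Pi.add_apply, add_smul]
    · rintro a x hx hx1
      conv_lhs => rw [hx1]
      rw [Finset.smul_sum]
      refine Finset.sum_congr rfl fun i _ => ?_
      simp only [Pi.smul_apply, smul_eq_mul, smul_smul]
  rw [hrec]
  exact Finset.sum_eq_zero fun i _ => by rw [hpsi i, zero_smul]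
end
end

section
/- Let p ≥ 5 be prime, F a field of characteristic p, and consider the restricted 2-cochain complex of g^λ(p) (p ≢ 2 mod 3) with λ ≠ 0. Then a pair (φ, ω) ∈ C²_* satisfies d²_*(φ, ω) = (0, 0) if and only if d²(φ) = 0, i.e., ind²(φ, ω) = 0 automatically for every ordinary 2-cocycle φ. -/
noncomputable section

variable (F : Type*) [Field F] (p : ℕ)

/-- The `[p]`-operation of `g^λ(p)`: `g^{[p]} = (Σ α_i^p λ_i) e_p`. -/
def pOpL (lam : ℕ → F) (g : Fin p → F) : Fin p → F :=
  (∑ i ∈ Finset.Icc 1 p, (coord F p i g) ^ p * lam i) • E F p p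


namespace GlamAux

variable {F : Type*} [Field F] {p : ℕ}

lemma aF_zero (F : Type*) [Field F] (i j : ℕ) (h : (j + 2*i) % 3 = 0) : aF F i j = 0 := by
  have h1 : ((j:ℤ) - (i:ℤ)) % 3 = 0 := by omega
  simp [aF, aZ, h1]

lemma aF_one (F : Type*) [Field F] (i j : ℕ) (h : (j + 2*i) % 3 = 1) : aF F i j = 1 := by
  have h1 : ((j:ℤ) - (i:ℤ)) % 3 = 1 := by omega
  simp [aF, aZ, h1]

lemma aF_negone (F : Type*) [Field F] (i j : ℕ) (h : (j + 2*i) % 3 = 2) : aF F i j = -1 := by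
  have h1 : ((j:ℤ) - (i:ℤ)) % 3 = 2 := by omega
  simp [aF, aZ, h1]

lemma E_zero (F : Type*) [Field F] (p k : ℕ) (h : ¬ (1 ≤ k ∧ k ≤ p)) : E F p k = 0 := by
  simp [E, h]

lemma E_eq (F : Type*) [Field F] (p k : ℕ) (h1 : 1 ≤ k) (h2 : k ≤ p) :
    E F p k = Pi.single (⟨k - 1, by omega⟩ : Fin p) 1 := by
  simp [E, h1, h2]

lemma br_E (F : Type*) [Field F] (p a b : ℕ) (ha1 : 1 ≤ a) (ha2 : a ≤ p)
    (hb1 : 1 ≤ b) (hb2 : b ≤ p) :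
    br F p (E F p a) (E F p b) = aF F a b • E F p (a + b) := by
  have hA : E F p a = Pi.single (⟨a - 1, by omega⟩ : Fin p) 1 := E_eq F p a ha1 ha2
  have hB : E F p b = Pi.single (⟨b - 1, by omega⟩ : Fin p) 1 := E_eq F p b hb1 hb2
  unfold br
  rw [Finset.sum_eq_single (⟨a - 1, by omega⟩ : Fin p)]
  · rw [Finset.sum_eq_single (⟨b - 1, by omega⟩ : Fin p)]
    · have e1 : a - 1 + 1 = a := by omega
      have e2 : b - 1 + 1 = b := by omega
      simp [hA, hB, e1, e2]
    · intro j _ hj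
      have : E F p b j = 0 := by rw [hB]; exact Pi.single_eq_of_ne hj 1
      simp [this]
    · simp
  · intro i _ hi
    have : E F p a i = 0 := by rw [hA]; exact Pi.single_eq_of_ne hi 1
    simp [this]
  · simp


/-- Bilinearity and alternation, closed under span. -/
def IsGood (F : Type*) [Field F] (p : ℕ) (φ : (Fin p → F) → (Fin p → F) → F) : Prop :=
  (∀ g g' h, φ (g + g') h = φ g h + φ g' h) ∧
  (∀ (c : F) g h, φ (c • g) h = c * φ g h) ∧
  (∀ g h h', φ g (h + h') = φ g h + φ g h') ∧
  (∀ (c : F) g h, φ g (c • h) = c * φ g h) ∧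
  (∀ g, φ g g = 0)

lemma coord_add (F : Type*) [Field F] (p k : ℕ) (g h : Fin p → F) :
    coord F p k (g + h) = coord F p k g + coord F p k h := by
  unfold coord; split <;> simp

lemma coord_smul (F : Type*) [Field F] (p k : ℕ) (c : F) (g : Fin p → F) :
    coord F p k (c • g) = c * coord F p k g := by
  unfold coord; split <;> simp

lemma isGood_of_mem (F : Type*) [Field F] (p : ℕ)
    (φ : (Fin p → F) → (Fin p → F) → F) (hφ : φ ∈ C2span F p) : IsGood F p φ := by
  refine Submodule.span_induction ?_ ?_ ?_ ?_ hφ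
  · rintro w ⟨i, j, -, -, -, rfl⟩
    refine ⟨?_, ?_, ?_, ?_, ?_⟩ <;> intros <;>
      simp only [wedge, coord_add, coord_smul] <;> ring
  · refine ⟨?_, ?_, ?_, ?_, ?_⟩ <;> intros <;> simp
  · rintro f g - - ⟨f1, f2, f3, f4, f5⟩ ⟨g1, g2, g3, g4, g5⟩
    refine ⟨?_, ?_, ?_, ?_, ?_⟩ <;> intros <;>
      simp only [Pi.add_apply, f1, f2, f3, f4, f5, g1, g2, g3, g4, g5] <;> ring
  · rintro c f - ⟨f1, f2, f3, f4, f5⟩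
    refine ⟨?_, ?_, ?_, ?_, ?_⟩ <;> intros <;>
      simp only [Pi.smul_apply, smul_eq_mul, f1, f2, f3, f4, f5] <;> ring


variable {φ : (Fin p → F) → (Fin p → F) → F}

lemma phi_zero_left (good : IsGood F p φ) (h : Fin p → F) : φ 0 h = 0 := by
  have := good.2.1 0 0 h
  simpa using this

lemma phi_antisym (good : IsGood F p φ) (g h : Fin p → F) : φ g h = -φ h g := by
  have h0 := good.2.2.2.2 (g + h)
  rw [good.1, good.2.2.1, good.2.2.1, good.2.2.2.2, good.2.2.2.2] at h0
  linear_combination h0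

lemma S_left_zero (good : IsGood F p φ) (x y : ℕ) (hx : p < x) :
    φ (E F p x) (E F p y) = 0 := by
  rw [E_zero F p x (by omega)]
  exact phi_zero_left good _

lemma rel (good : IsGood F p φ) (hco : ∀ g h f, d2 F p φ g h f = 0)
    (a b c : ℕ) (ha1 : 1 ≤ a) (ha2 : a ≤ p) (hb1 : 1 ≤ b) (hb2 : b ≤ p)
    (hc1 : 1 ≤ c) (hc2 : c ≤ p) :
    aF F a b * φ (E F p (a + b)) (E F p c)
      - aF F a c * φ (E F p (a + c)) (E F p b)
      + aF F b c * φ (E F p (b + c)) (E F p a) = 0 := by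
  have h := hco (E F p a) (E F p b) (E F p c)
  unfold d2 at h
  rw [br_E F p a b ha1 ha2 hb1 hb2, br_E F p a c ha1 ha2 hc1 hc2,
    br_E F p b c hb1 hb2 hc1 hc2, good.2.1, good.2.1, good.2.1] at h
  linear_combination h


lemma sig_mid (good : IsGood F p φ) (hco : ∀ g h f, d2 F p φ g h f = 0)
    (h5 : 5 ≤ p) (m : ℕ) (h3m : 3 ≤ m) (hmp : m < p) :
    φ (E F p m) (E F p p) = 0 := by
  rcases (show m % 3 = 2 ∨ (m % 3 = 0 ∨ m % 3 = 1) by omega) with hm | hm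
  · have r := rel good hco 2 (m - 2) p (by omega) (by omega) (by omega) (by omega)
      (by omega) (le_refl p)
    have e : 2 + (m - 2) = m := by omega
    have a1 : aF F 2 (m - 2) = 1 := aF_one F 2 (m - 2) (by omega)
    have z1 : φ (E F p (2 + p)) (E F p (m - 2)) = 0 := S_left_zero good _ _ (by omega)
    have z2 : φ (E F p (m - 2 + p)) (E F p 2) = 0 := S_left_zero good _ _ (by omega)
    rw [e, a1, z1, z2] at r
    linear_combination r
  · have r := rel good hco 1 (m - 1) p (by omega) (by omega) (by omega) (by omega)
      (by omega) (le_refl p)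
    have e : 1 + (m - 1) = m := by omega
    have z1 : φ (E F p (1 + p)) (E F p (m - 1)) = 0 := S_left_zero good _ _ (by omega)
    have z2 : φ (E F p (m - 1 + p)) (E F p 1) = 0 := S_left_zero good _ _ (by omega)
    rcases hm with hm | hm
    · have a1 : aF F 1 (m - 1) = 1 := aF_one F 1 (m - 1) (by omega)
      rw [e, a1, z1, z2] at r
      linear_combination r
    · have a1 : aF F 1 (m - 1) = -1 := aF_negone F 1 (m - 1) (by omega)
      rw [e, a1, z1, z2] at r
      linear_combination -r


lemma sig_one [CharP F p] (good : IsGood F p φ) (hco : ∀ g h f, d2 F p φ g h f = 0)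
    (h7 : 7 ≤ p) (hp1 : p % 3 = 1) :
    φ (E F p 1) (E F p p) = 0 := by
  have r1 := rel good hco 1 3 (p - 3) (by omega) (by omega) (by omega) (by omega)
    (by omega) (by omega)
  have r2 := rel good hco 1 4 (p - 4) (by omega) (by omega) (by omega) (by omega)
    (by omega) (by omega)
  have e1 : 3 + (p - 3) = p := by omega
  have e2 : 4 + (p - 4) = p := by omega
  have e3 : 1 + (p - 4) = p - 3 := by omega
  have a1 : aF F 1 3 = -1 := aF_negone F 1 3 (by omega)
  have a2 : aF F 1 (p - 3) = 0 := aF_zero F 1 (p - 3) (by omega)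
  have a3 : aF F 3 (p - 3) = 1 := aF_one F 3 (p - 3) (by omega)
  have a4 : aF F 1 4 = 0 := aF_zero F 1 4 (by omega)
  have a5 : aF F 1 (p - 4) = -1 := aF_negone F 1 (p - 4) (by omega)
  have a6 : aF F 4 (p - 4) = -1 := aF_negone F 4 (p - 4) (by omega)
  rw [e1, a1, a2, a3] at r1
  rw [e2, e3, a4, a5, a6] at r2
  have hA : φ (E F p (p - 3)) (E F p 4) = -φ (E F p 4) (E F p (p - 3)) :=
    phi_antisym good _ _
  have key : (2 : F) * φ (E F p p) (E F p 1) = 0 := by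
    linear_combination r1 - r2 + hA
  have h2 : (2 : F) ≠ 0 := by
    have : ((2 : ℕ) : F) ≠ 0 := by
      rw [Ne, CharP.cast_eq_zero_iff F p 2]
      intro hd
      have := Nat.le_of_dvd (by norm_num) hd
      omega
    simpa using this
  have hz : φ (E F p p) (E F p 1) = 0 := by
    rcases mul_eq_zero.mp key with h | h
    · exact absurd h h2
    · exact h
  rw [phi_antisym good, hz, neg_zero]


lemma sig_two [CharP F p] (good : IsGood F p φ) (hco : ∀ g h f, d2 F p φ g h f = 0)
    (h7 : 7 ≤ p) (hp1 : p % 3 = 1) :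
    φ (E F p 2) (E F p p) = 0 := by
  have claim : ∀ k : ℕ, 3*k+4 ≤ p →
      φ (E F p (3*k+2)) (E F p (p - 3*k)) = ((k:F)+1) * φ (E F p 2) (E F p p) ∧
      φ (E F p (3*k+3)) (E F p (p - (3*k+1))) = ((k:F)+1) * φ (E F p 2) (E F p p) ∧
      φ (E F p (3*k+4)) (E F p (p - (3*k+2))) = ((k:F)+1) * φ (E F p 2) (E F p p) := by
    intro k
    induction k with
    | zero =>
      intro hk
      norm_num
      have r := rel good hco 1 2 (p-1) (by omega) (by omega) (by omega) (by omega)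
        (by omega) (by omega)
      have a1 : aF F 1 2 = 1 := aF_one F 1 2 (by omega)
      have a2 : aF F 1 (p-1) = -1 := aF_negone F 1 (p-1) (by omega)
      have z1 : φ (E F p (2 + (p-1))) (E F p 1) = 0 := S_left_zero good _ _ (by omega)
      have e1 : 1 + 2 = 3 := by omega
      have e2 : 1 + (p-1) = p := by omega
      rw [a1, a2, z1, e1, e2] at r
      have hA : φ (E F p p) (E F p 2) = -φ (E F p 2) (E F p p) := phi_antisym good _ _
      have c2 : φ (E F p 3) (E F p (p-1)) = φ (E F p 2) (E F p p) := by
        linear_combination r - hA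
      have r' := rel good hco 1 3 (p-2) (by omega) (by omega) (by omega) (by omega)
        (by omega) (by omega)
      have a3 : aF F 1 3 = -1 := aF_negone F 1 3 (by omega)
      have a4 : aF F 1 (p-2) = 1 := aF_one F 1 (p-2) (by omega)
      have z2 : φ (E F p (3 + (p-2))) (E F p 1) = 0 := S_left_zero good _ _ (by omega)
      have e3 : 1 + 3 = 4 := by omega
      have e4 : 1 + (p-2) = p-1 := by omega
      rw [a3, a4, z2, e3, e4] at r'
      have hB : φ (E F p (p-1)) (E F p 3) = -φ (E F p 3) (E F p (p-1)) := phi_antisym good _ _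
      have c3 : φ (E F p 4) (E F p (p-2)) = φ (E F p 2) (E F p p) := by
        linear_combination -r' - hB + c2
      exact ⟨c2, c3⟩
    | succ k ih =>
      intro hk
      obtain ⟨ih1, ih2, ih3⟩ := ih (by omega)
      have e1 : 3*(k+1)+2 = 3*k+5 := by omega
      have e2 : p - 3*(k+1) = p - (3*k+3) := by omega
      have e3 : 3*(k+1)+3 = 3*k+6 := by omega
      have e4 : p - (3*(k+1)+1) = p - (3*k+4) := by omega
      have e5 : 3*(k+1)+4 = 3*k+7 := by omega
      have e6 : p - (3*(k+1)+2) = p - (3*k+5) := by omega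
      rw [e2, e4, e6, e1, e3, e5]
      push_cast
      -- T-relation at (2, 3k+3, p-(3k+3))
      have r1 := rel good hco 2 (3*k+3) (p - (3*k+3)) (by omega) (by omega) (by omega)
        (by omega) (by omega) (by omega)
      have b1 : aF F 2 (3*k+3) = 1 := aF_one F 2 (3*k+3) (by omega)
      have b2 : aF F 2 (p - (3*k+3)) = -1 := aF_negone F 2 (p - (3*k+3)) (by omega)
      have b3 : aF F (3*k+3) (p - (3*k+3)) = 1 := aF_one F (3*k+3) (p - (3*k+3)) (by omega)
      have f1 : 2 + (3*k+3) = 3*k+5 := by omega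
      have f2 : 2 + (p - (3*k+3)) = p - (3*k+1) := by omega
      have f3 : 3*k+3 + (p - (3*k+3)) = p := by omega
      rw [b1, b2, b3, f1, f2, f3] at r1
      have hA1 : φ (E F p (p - (3*k+1))) (E F p (3*k+3))
          = -φ (E F p (3*k+3)) (E F p (p - (3*k+1))) := phi_antisym good _ _
      have hA2 : φ (E F p p) (E F p 2) = -φ (E F p 2) (E F p p) := phi_antisym good _ _
      have c1 : φ (E F p (3*k+5)) (E F p (p - (3*k+3)))
          = ((k:F)+1+1) * φ (E F p 2) (E F p p) := by
        linear_combination r1 - hA1 - hA2 + ih2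
      -- S-relation at (1, 3k+5, p-(3k+4))
      have r2 := rel good hco 1 (3*k+5) (p - (3*k+4)) (by omega) (by omega) (by omega)
        (by omega) (by omega) (by omega)
      have b4 : aF F 1 (3*k+5) = 1 := aF_one F 1 (3*k+5) (by omega)
      have b5 : aF F 1 (p - (3*k+4)) = -1 := aF_negone F 1 (p - (3*k+4)) (by omega)
      have z1 : φ (E F p (3*k+5 + (p - (3*k+4)))) (E F p 1) = 0 :=
        S_left_zero good _ _ (by omega)
      have f4 : 1 + (3*k+5) = 3*k+6 := by omega
      have f5 : 1 + (p - (3*k+4)) = p - (3*k+3) := by omega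
      rw [b4, b5, z1, f4, f5] at r2
      have hA3 : φ (E F p (p - (3*k+3))) (E F p (3*k+5))
          = -φ (E F p (3*k+5)) (E F p (p - (3*k+3))) := phi_antisym good _ _
      have c2 : φ (E F p (3*k+6)) (E F p (p - (3*k+4)))
          = ((k:F)+1+1) * φ (E F p 2) (E F p p) := by
        linear_combination r2 - hA3 + c1
      -- S-relation at (1, 3k+6, p-(3k+5))
      have r3 := rel good hco 1 (3*k+6) (p - (3*k+5)) (by omega) (by omega) (by omega)
        (by omega) (by omega) (by omega)
      have b6 : aF F 1 (3*k+6) = -1 := aF_negone F 1 (3*k+6) (by omega)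
      have b7 : aF F 1 (p - (3*k+5)) = 1 := aF_one F 1 (p - (3*k+5)) (by omega)
      have z2 : φ (E F p (3*k+6 + (p - (3*k+5)))) (E F p 1) = 0 :=
        S_left_zero good _ _ (by omega)
      have f6 : 1 + (3*k+6) = 3*k+7 := by omega
      have f7 : 1 + (p - (3*k+5)) = p - (3*k+4) := by omega
      rw [b6, b7, z2, f6, f7] at r3
      have hA4 : φ (E F p (p - (3*k+4))) (E F p (3*k+6))
          = -φ (E F p (3*k+6)) (E F p (p - (3*k+4))) := phi_antisym good _ _
      have c3 : φ (E F p (3*k+7)) (E F p (p - (3*k+5)))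
          = ((k:F)+1+1) * φ (E F p 2) (E F p p) := by
        linear_combination -r3 - hA4 + c2
      exact ⟨c1, c2, c3⟩
  obtain ⟨k, hk⟩ : ∃ k, p = 3*k+4 := ⟨(p-4)/3, by omega⟩
  obtain ⟨-, -, c3⟩ := claim k (by omega)
  have e1 : 3*k+4 = p := by omega
  have e2 : p - (3*k+2) = 2 := by omega
  rw [e1, e2] at c3
  have hA : φ (E F p p) (E F p 2) = -φ (E F p 2) (E F p p) := phi_antisym good _ _
  have key : ((k:F)+2) * φ (E F p 2) (E F p p) = 0 := by
    linear_combination hA - c3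
  have hne : ((k:F)+2) ≠ 0 := by
    have h' : ((k+2:ℕ):F) ≠ 0 := by
      rw [Ne, CharP.cast_eq_zero_iff F p]
      intro hd
      have := Nat.le_of_dvd (by omega) hd
      omega
    push_cast at h'
    exact h'
  rcases mul_eq_zero.mp key with h | h
  · exact absurd h hne
  · exact h


lemma phi_Ep (good : IsGood F p φ)
    (hvan : ∀ m, 1 ≤ m → m ≤ p → φ (E F p m) (E F p p) = 0) (g : Fin p → F) :
    φ g (E F p p) = 0 := by
  let L : (Fin p → F) →ₗ[F] F :=
    { toFun := fun x => φ x (E F p p)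
      map_add' := fun x y => good.1 x y _
      map_smul' := fun c x => good.2.1 c x _ }
  have hg : g = ∑ i : Fin p, Pi.single i (g i) := (Finset.univ_sum_single g).symm
  show L g = 0
  rw [hg, map_sum]
  refine Finset.sum_eq_zero fun i _ => ?_
  have hs : Pi.single i (g i) = g i • (Pi.single i 1 : Fin p → F) := by
    funext j
    by_cases h : j = i <;> simp [Pi.single_apply, h]
  have hE : (Pi.single i 1 : Fin p → F) = E F p (i.1+1) := by
    rw [E_eq F p (i.1+1) (by omega) (by omega)]
    have : (⟨i.1 + 1 - 1, by omega⟩ : Fin p) = i := Fin.ext (by simp)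
    rw [this]
  rw [hs, map_smul, smul_eq_mul]
  have : L (Pi.single i 1 : Fin p → F) = 0 := by
    show φ (Pi.single i 1 : Fin p → F) (E F p p) = 0
    rw [hE]
    exact hvan (i.1+1) (by omega) (by omega)
  rw [this, mul_zero]

end GlamAux

/-- For `p ≢ 2 (mod 3)` and `λ ≠ 0`, a pair `(φ, ω) ∈ C²_*` is a restricted
2-cocycle iff `d²(φ) = 0`: the map `ind²(φ,ω)(g,h) = φ(g ∧ h^{[p]})` vanishes
automatically for every ordinary 2-cocycle `φ`. -/
theorem restricted_d2_iff_ordinary (p : ℕ) (hp : p.Prime) (h5 : 5 ≤ p)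
    (h3 : p % 3 ≠ 2) (F : Type*) [Field F] [CharP F p] (lam : ℕ → F)
    (hlam : ∃ i, 1 ≤ i ∧ i ≤ p ∧ lam i ≠ 0) :
    ∀ φ ∈ C2span F p,
      ((∀ g h f, d2 F p φ g h f = 0) ∧ ∀ g h, φ g (pOpL F p lam h) = 0)
        ↔ (∀ g h f, d2 F p φ g h f = 0) := by
  intro φ hφ
  have good := GlamAux.isGood_of_mem F p φ hφ
  constructor
  · exact fun h => h.1
  · intro hco
    refine ⟨hco, ?_⟩
    have hp1 : p % 3 = 1 := by
      rcases (show p % 3 = 0 ∨ p % 3 = 1 ∨ p % 3 = 2 by omega) with h | h | h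
      · exfalso
        have h3d : (3:ℕ) ∣ p := by omega
        rcases hp.eq_one_or_self_of_dvd 3 h3d with h' | h' <;> omega
      · exact h
      · exact absurd h h3
    have h7 : 7 ≤ p := by omega
    have hvan : ∀ m, 1 ≤ m → m ≤ p → φ (E F p m) (E F p p) = 0 := by
      intro m h1 h2
      rcases eq_or_lt_of_le h2 with rfl | hlt
      · exact good.2.2.2.2 _
      rcases (show m = 1 ∨ m = 2 ∨ 3 ≤ m by omega) with rfl | rfl | h3m
      · exact GlamAux.sig_one good hco h7 hp1
      · exact GlamAux.sig_two good hco h7 hp1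
      · exact GlamAux.sig_mid good hco h5 m h3m hlt
    intro g h
    unfold pOpL
    rw [good.2.2.2.1, GlamAux.phi_Ep good hvan g, mul_zero]
end
end
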